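/- There exists a universal constant c > 0 such that for every integer n ≥ 2, P( Z < c · ln n ) ≤ 1 / ln n. -/

import Mathlib

open MeasureTheory ProbabilityTheory Filter

/-- The Markov chain modeling the CD-P heuristic (unbounded reach), driven by a
sequence `U` of i.i.d. uniform random variables on `[0,1]`: it starts at `n`, and from a
state `m ≥ 1` it jumps to a uniformly chosen state in `{0, …, m-1}` (state `0` is absorbing). -/
noncomputable def chainR {Ω : Type*} (n : ℕ) (U : ℕ → Ω → ℝ) : ℕ → Ω → ℕ
  | 0 => fun _ => n
  | (t + 1) => fun ω => ⌊(chainR n U t ω : ℝ) * U (t + 1) ω⌋₊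

/-- `hitZ n U` is the hitting time of `0` for the chain `chainR n U`. -/
noncomputable def hitZ {Ω : Type*} (n : ℕ) (U : ℕ → Ω → ℝ) (ω : Ω) : ℕ :=
  sInf {t | chainR n U t ω = 0}

open Set
open scoped ENNReal Topology

section Aux

variable {Ω : Type} {U : ℕ → Ω → ℝ} {n : ℕ} {ω : Ω}

lemma chain_le (hU : ∀ i, 0 ≤ U i ω) (t : ℕ) :
    (chainR n U t ω : ℝ) ≤ n * ∏ i ∈ Finset.Icc 1 t, U i ω := by
  induction t with
  | zero => simp [chainR]
  | succ t ih =>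
      have h0 : (0:ℝ) ≤ (chainR n U t ω : ℝ) * U (t+1) ω :=
        mul_nonneg (Nat.cast_nonneg _) (hU _)
      calc (chainR n U (t+1) ω : ℝ) ≤ (chainR n U t ω : ℝ) * U (t+1) ω := Nat.floor_le h0
        _ ≤ (n * ∏ i ∈ Finset.Icc 1 t, U i ω) * U (t+1) ω :=
            mul_le_mul_of_nonneg_right ih (hU _)
        _ = n * ∏ i ∈ Finset.Icc 1 (t+1), U i ω := by
            rw [Finset.prod_Icc_succ_top (by omega)]; ring

lemma chain_ge (hU : ∀ i, U i ω ∈ Set.Icc (0:ℝ) 1) (t : ℕ) :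
    (n:ℝ) * ∏ i ∈ Finset.Icc 1 t, U i ω ≤ chainR n U t ω + t := by
  induction t with
  | zero => simp [chainR]
  | succ t ih =>
      have h0 : (0:ℝ) ≤ U (t+1) ω := (hU _).1
      have h1 : U (t+1) ω ≤ 1 := (hU _).2
      have hfl : (chainR n U t ω : ℝ) * U (t+1) ω < chainR n U (t+1) ω + 1 := by
        simpa [chainR] using Nat.lt_floor_add_one ((chainR n U t ω : ℝ) * U (t+1) ω)
      calc (n:ℝ) * ∏ i ∈ Finset.Icc 1 (t+1), U i ω
          = ((n:ℝ) * ∏ i ∈ Finset.Icc 1 t, U i ω) * U (t+1) ω := by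
            rw [Finset.prod_Icc_succ_top (by omega)]; ring
        _ ≤ ((chainR n U t ω : ℝ) + t) * U (t+1) ω :=
            mul_le_mul_of_nonneg_right ih h0
        _ = (chainR n U t ω : ℝ) * U (t+1) ω + t * U (t+1) ω := by ring
        _ ≤ (chainR n U t ω : ℝ) * U (t+1) ω + t :=  by
            have : (t:ℝ) * U (t+1) ω ≤ t := by
              nlinarith [Nat.cast_nonneg (α := ℝ) t]
            linarith
        _ ≤ chainR n U (t+1) ω + ((t:ℝ)+1) := by linarith
        _ = chainR n U (t+1) ω + ((t+1 : ℕ):ℝ) := by push_cast; ring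

lemma chain_absorb {t : ℕ} (h : chainR n U t ω = 0) {s : ℕ} (hts : t ≤ s) :
    chainR n U s ω = 0 := by
  obtain ⟨k, rfl⟩ := Nat.exists_eq_add_of_le hts
  induction k with
  | zero => simpa using h
  | succ k ih => simp [chainR, ← Nat.add_assoc, ih]

lemma final_numeric (n T : ℕ) (hn : 2 ≤ n) (_hT1 : 1 ≤ T)
    (hT : (T:ℝ) ≤ Real.log n / 100) :
    (2:ℝ)^T * Real.sqrt ((T:ℝ)/n) ≤ 1 / Real.log n := by
  set x := Real.log n with hxdef
  have hn1 : (1:ℝ) < n := by exact_mod_cast Nat.lt_of_lt_of_le one_lt_two hn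
  have hn0 : (0:ℝ) < n := by linarith
  have hx : 0 < x := Real.log_pos hn1
  have hT0 : (0:ℝ) ≤ T := Nat.cast_nonneg T
  have h4 : (4:ℝ)^T ≤ Real.exp (x/50) := by
    have h4e : (4:ℝ)^T = Real.exp ((T:ℝ) * Real.log 4) := by
      rw [← Real.log_pow, Real.exp_log (by positivity)]
    have h1e : (2:ℝ) ≤ Real.exp 1 := by
      have := Real.exp_one_gt_d9; linarith
    have hlog4 : Real.log 4 ≤ 2 := by
      rw [Real.log_le_iff_le_exp (by norm_num)]
      calc (4:ℝ) = 2 * 2 := by norm_num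
        _ ≤ Real.exp 1 * Real.exp 1 := by nlinarith
        _ = Real.exp 2 := by rw [← Real.exp_add]; norm_num
    have hlog4' : (0:ℝ) ≤ Real.log 4 := Real.log_nonneg (by norm_num)
    rw [h4e]
    apply Real.exp_le_exp.mpr
    nlinarith
  have hx3 : x^3 ≤ 27 * (50/49)^3 * Real.exp (49/50*x) := by
    set y := 49/50*x with hy
    have hy0 : 0 ≤ y := by positivity
    have h13 : y/3 ≤ Real.exp (y/3) := by
      have := Real.add_one_le_exp (y/3); linarith
    have hcube : (y/3)^3 ≤ (Real.exp (y/3))^3 := by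
      apply pow_le_pow_left₀ (by positivity) h13
    have hexp3 : (Real.exp (y/3))^3 = Real.exp y := by
      rw [← Real.exp_nat_mul]; congr 1; push_cast; ring
    have hy3 : y^3 ≤ 27 * Real.exp y := by
      rw [hexp3] at hcube
      nlinarith
    have hxy : x = (50/49) * y := by rw [hy]; ring
    rw [hxy]
    calc ((50:ℝ)/49 * y)^3 = (50/49)^3 * y^3 := by ring
      _ ≤ (50/49)^3 * (27 * Real.exp y) := by nlinarith
      _ = 27 * (50/49)^3 * Real.exp y := by ring
  have hexpx : Real.exp x = n := Real.exp_log hn0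
  have key : (4:ℝ)^T * T * x^2 ≤ n := by
    have c1 : (4:ℝ)^T * T * x^2 ≤ Real.exp (x/50) * (x/100) * x^2 := by
      have h40 : (0:ℝ) ≤ (4:ℝ)^T := by positivity
      apply mul_le_mul_of_nonneg_right _ (sq_nonneg x)
      apply mul_le_mul h4 (by linarith) hT0 (by positivity)
    have c2 : Real.exp (x/50) * (x/100) * x^2 = Real.exp (x/50) * (x^3/100) := by ring
    have c3 : Real.exp (x/50) * (x^3/100)
        ≤ Real.exp (x/50) * (27 * (50/49)^3 * Real.exp (49/50*x) / 100) := by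
      apply mul_le_mul_of_nonneg_left _ (Real.exp_nonneg _)
      linarith
    have hmul : Real.exp (x/50) * Real.exp (49/50*x) = Real.exp x := by
      rw [← Real.exp_add]; congr 1; ring
    have c4 : Real.exp (x/50) * (27 * (50/49)^3 * Real.exp (49/50*x) / 100)
        = (27 * (50/49)^3 / 100) * Real.exp x := by
      rw [← hmul]; ring
    have c5 : (27 * (50/49)^3 / 100 : ℝ) ≤ 1 := by norm_num
    have c6 : (27 * (50/49)^3 / 100) * Real.exp x ≤ Real.exp x := by
      nlinarith [Real.exp_nonneg x]
    rw [hexpx] at c6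
    linarith
  have h2 : ((2:ℝ)^T)^2 = (4:ℝ)^T := by
    rw [← pow_mul, mul_comm, pow_mul]; norm_num
  have hmid : ((2:ℝ)^T)^2 * ((T:ℝ)/n) ≤ (1/x)^2 := by
    rw [h2]
    have e1 : (4:ℝ)^T * ((T:ℝ)/n) = ((4:ℝ)^T * T)/n := by ring
    have e2 : ((1:ℝ)/x)^2 = 1/x^2 := by ring
    rw [e1, e2, div_le_div_iff₀ hn0 (by positivity)]
    nlinarith
  calc (2:ℝ)^T * Real.sqrt ((T:ℝ)/n)
      = Real.sqrt (((2:ℝ)^T)^2 * ((T:ℝ)/n)) := by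
        rw [Real.sqrt_mul (sq_nonneg _), Real.sqrt_sq (by positivity)]
    _ ≤ Real.sqrt ((1/x)^2) := Real.sqrt_le_sqrt hmid
    _ = 1/x := Real.sqrt_sq (by positivity)

end Aux

section Prob

variable {Ω : Type} [MeasureSpace Ω] [IsProbabilityMeasure (ℙ : Measure Ω)]

lemma lintegral_finset_prod (V : ℕ → Ω → ℝ≥0∞) (hV : ∀ i, Measurable (V i))
    (h : iIndepFun V ℙ) (s : Finset ℕ) :
    ∫⁻ ω, ∏ i ∈ s, V i ω ∂ℙ = ∏ i ∈ s, ∫⁻ ω, V i ω ∂ℙ := by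
  induction s using Finset.induction with
  | empty => simp
  | @insert i s hi ih =>
      have hind : IndepFun (V i) (∏ j ∈ s, V j) ℙ :=
        (h.indepFun_finsetProd_of_notMem hV hi).symm
      have hmeas : Measurable (∏ j ∈ s, V j) := by
        simpa [Finset.prod_fn] using Finset.measurable_prod s (fun j _ => hV j)
      simp_rw [Finset.prod_insert hi]
      calc ∫⁻ ω, V i ω * ∏ j ∈ s, V j ω ∂ℙ
          = ∫⁻ ω, (V i * ∏ j ∈ s, V j) ω ∂ℙ := by
            apply lintegral_congr; intro ω; simp
        _ = (∫⁻ ω, V i ω ∂ℙ) * ∫⁻ ω, (∏ j ∈ s, V j) ω ∂ℙ :=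
            lintegral_mul_eq_lintegral_mul_lintegral_of_indepFun (hV i) hmeas hind
        _ = (∫⁻ ω, V i ω ∂ℙ) * ∏ j ∈ s, ∫⁻ ω, V j ω ∂ℙ := by
            rw [← ih]; congr 1; apply lintegral_congr; intro ω; simp

lemma prob_prod_ge {U : ℕ → Ω → ℝ}
    (hUm : ∀ i, Measurable (U i))
    (hind : iIndepFun U ℙ)
    (hmap : ∀ i, Measure.map (U i) ℙ = (volume : Measure ℝ).restrict (Set.Icc 0 1))
    (g : ℝ → ℝ≥0∞) (hg : Measurable g) (I : ℝ≥0∞)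
    (hI : ∫⁻ u in Icc (0:ℝ) 1, g u = I) (t : ℕ) {a : ℝ≥0∞} (ha0 : a ≠ 0) (hatop : a ≠ ∞) :
    ℙ {ω | a ≤ ∏ i ∈ Finset.Icc 1 t, g (U i ω)} ≤ I ^ t / a := by
  have hV : ∀ i, Measurable (fun ω => g (U i ω)) := fun i => hg.comp (hUm i)
  have hVind : iIndepFun (fun i => fun ω => g (U i ω)) ℙ :=
    hind.comp (fun _ => g) (fun _ => hg)
  have hone : ∀ i, ∫⁻ ω, g (U i ω) ∂ℙ = I := by
    intro i
    rw [← lintegral_map hg (hUm i), hmap i, hI]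
  have hlint : ∫⁻ ω, ∏ i ∈ Finset.Icc 1 t, g (U i ω) ∂ℙ = I ^ t := by
    rw [lintegral_finset_prod _ hV hVind, Finset.prod_congr rfl (fun i _ => hone i),
      Finset.prod_const, Nat.card_Icc]
    simp
  have hmeasprod : Measurable (fun ω => ∏ i ∈ Finset.Icc 1 t, g (U i ω)) :=
    Finset.measurable_prod _ (fun i _ => hV i)
  calc ℙ {ω | a ≤ ∏ i ∈ Finset.Icc 1 t, g (U i ω)}
      ≤ (∫⁻ ω, ∏ i ∈ Finset.Icc 1 t, g (U i ω) ∂ℙ) / a :=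
        meas_ge_le_lintegral_div hmeasprod.aemeasurable ha0 hatop
    _ = I ^ t / a := by rw [hlint]

lemma lint_Icc_ofReal : ∫⁻ u in Icc (0:ℝ) 1, ENNReal.ofReal u = ENNReal.ofReal 2⁻¹ := by
  rw [← ofReal_integral_eq_lintegral_ofReal]
  · norm_num [integral_Icc_eq_integral_Ioc, ← intervalIntegral.integral_of_le zero_le_one]
  · exact (continuous_id.integrableOn_Icc (μ := volume))
  · exact ae_restrict_of_forall_mem measurableSet_Icc (fun x hx => hx.1)

lemma lint_Icc_rpow :
    ∫⁻ u in Icc (0:ℝ) 1, (ENNReal.ofReal u) ^ (-(2⁻¹:ℝ)) = ENNReal.ofReal 2 := by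
  rw [← MeasureTheory.Measure.restrict_congr_set Ioc_ae_eq_Icc]
  have h1 : ∀ u ∈ Ioc (0:ℝ) 1,
      (ENNReal.ofReal u) ^ (-(2⁻¹:ℝ)) = ENNReal.ofReal (u ^ (-(2⁻¹:ℝ))) := by
    intro u hu
    rw [← ENNReal.ofReal_rpow_of_pos hu.1]
  rw [setLIntegral_congr_fun measurableSet_Ioc h1]
  rw [← ofReal_integral_eq_lintegral_ofReal]
  · rw [← intervalIntegral.integral_of_le zero_le_one,
      integral_rpow (Or.inl (by norm_num))]
    norm_num
  · have := (intervalIntegral.intervalIntegrable_rpow' (r := (-(2⁻¹:ℝ))) (by norm_num)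
      (a := 0) (b := 1))
    rw [intervalIntegrable_iff_integrableOn_Ioc_of_le zero_le_one] at this
    exact this
  · refine ae_restrict_of_forall_mem measurableSet_Ioc (fun x hx => ?_)
    exact Real.rpow_nonneg hx.1.le _

end Prob

/-- There is a universal constant `c > 0` such that for every integer `n ≥ 2`,
`P(Z < c · ln n) ≤ 1 / ln n`. -/
theorem cdp_lower_tail_bound :
    ∃ c : ℝ, 0 < c ∧
      ∀ (Ω : Type) (_ : MeasureSpace Ω) (_ : IsProbabilityMeasure (ℙ : Measure Ω))
        (U : ℕ → Ω → ℝ), (∀ i, Measurable (U i)) →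
        iIndepFun U ℙ →
        (∀ i, Measure.map (U i) ℙ = (volume : Measure ℝ).restrict (Set.Icc 0 1)) →
        ∀ n : ℕ, 2 ≤ n →
          (ℙ {ω | (hitZ n U ω : ℝ) < c * Real.log n}).toReal ≤ 1 / Real.log n := by
  classical
  refine ⟨(100:ℝ)⁻¹, by norm_num, ?_⟩
  intro Ω _ _ U hUm hind hmap n hn
  have hn1 : (1:ℝ) < n := by exact_mod_cast Nat.lt_of_lt_of_le one_lt_two hn
  have hn0 : (0:ℝ) < n := by linarith
  have hx : 0 < Real.log n := Real.log_pos hn1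
  set x := Real.log n with hxdef
  set T : ℕ := Nat.floor ((100:ℝ)⁻¹ * x) with hTdef
  have hTle : (T:ℝ) ≤ x / 100 := by
    have := Nat.floor_le (by positivity : (0:ℝ) ≤ (100:ℝ)⁻¹ * x)
    rw [← hTdef] at this
    linarith
  -- the good event
  set G : Set Ω := {ω | ∀ i, U i ω ∈ Set.Icc (0:ℝ) 1} with hGdef
  have hGc : ℙ Gᶜ = 0 := by
    have hsub : Gᶜ ⊆ ⋃ i, {ω | U i ω ∈ Set.Icc (0:ℝ) 1}ᶜ := by
      intro ω hω
      simp only [hGdef, Set.mem_compl_iff, Set.mem_setOf_eq, not_forall] at hω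
      obtain ⟨i, hi⟩ := hω
      exact Set.mem_iUnion.mpr ⟨i, hi⟩
    refine measure_mono_null hsub (measure_iUnion_null fun i => ?_)
    have hms : MeasurableSet {ω | U i ω ∈ Set.Icc (0:ℝ) 1} := (hUm i) measurableSet_Icc
    have h1 : ℙ {ω | U i ω ∈ Set.Icc (0:ℝ) 1} = 1 := by
      have := Measure.map_apply (μ := ℙ) (hUm i) (measurableSet_Icc (a := (0:ℝ)) (b := 1))
      rw [hmap i, Measure.restrict_apply_self] at this
      rw [show {ω | U i ω ∈ Set.Icc (0:ℝ) 1} = U i ⁻¹' Set.Icc 0 1 from rfl, ← this,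
        Real.volume_Icc]
      norm_num
    rw [measure_compl hms (measure_ne_top _ _), h1, measure_univ, tsub_self]
  -- events
  set A : Set Ω := {ω | chainR n U T ω = 0} with hAdef
  -- `E ⊆ A ∪ (chain never vanishes up to time S)`
  have hES : ∀ S : ℕ, {ω | (hitZ n U ω : ℝ) < (100:ℝ)⁻¹ * x}
      ⊆ A ∪ {ω | chainR n U S ω ≠ 0} := by
    intro S ω hω
    simp only [Set.mem_setOf_eq] at hω
    by_cases hne : ∃ t, chainR n U t ω = 0
    · left
      have hmem : chainR n U (hitZ n U ω) ω = 0 := Nat.sInf_mem hne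
      have hle : hitZ n U ω ≤ T := by
        apply Nat.le_floor
        exact le_of_lt hω
      exact chain_absorb hmem hle
    · right
      push_neg at hne
      exact hne S
  -- bound on the "never vanishes" part
  have hB : ∀ S : ℕ, ℙ {ω | chainR n U S ω ≠ 0}
      ≤ (ENNReal.ofReal 2⁻¹) ^ S * (ENNReal.ofReal ((n:ℝ)⁻¹))⁻¹ := by
    intro S
    have ha0 : ENNReal.ofReal ((n:ℝ)⁻¹) ≠ 0 :=
      ne_of_gt (ENNReal.ofReal_pos.mpr (by positivity))
    have hinc : {ω | chainR n U S ω ≠ 0} ∩ G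
        ⊆ {ω | ENNReal.ofReal ((n:ℝ)⁻¹) ≤ ∏ i ∈ Finset.Icc 1 S, ENNReal.ofReal (U i ω)} := by
      rintro ω ⟨hω, hG⟩
      simp only [Set.mem_setOf_eq] at hω ⊢
      have hG' : ∀ i, U i ω ∈ Set.Icc (0:ℝ) 1 := hG
      have h1 : (1:ℝ) ≤ chainR n U S ω := by
        have := Nat.one_le_iff_ne_zero.mpr hω
        exact_mod_cast this
      have h2 : (chainR n U S ω : ℝ) ≤ n * ∏ i ∈ Finset.Icc 1 S, U i ω :=
        chain_le (n := n) (fun i => (hG' i).1) S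
      have h3 : (n:ℝ)⁻¹ ≤ ∏ i ∈ Finset.Icc 1 S, U i ω := by
        have h12 : (1:ℝ) ≤ n * ∏ i ∈ Finset.Icc 1 S, U i ω := h1.trans h2
        rw [inv_eq_one_div, div_le_iff₀ hn0]
        nlinarith
      calc ENNReal.ofReal ((n:ℝ)⁻¹) ≤ ENNReal.ofReal (∏ i ∈ Finset.Icc 1 S, U i ω) :=
            ENNReal.ofReal_le_ofReal h3
        _ = ∏ i ∈ Finset.Icc 1 S, ENNReal.ofReal (U i ω) :=
            ENNReal.ofReal_prod_of_nonneg (fun i _ => (hG' i).1)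
    calc ℙ {ω | chainR n U S ω ≠ 0}
        ≤ ℙ ({ω | chainR n U S ω ≠ 0} ∩ G ∪ Gᶜ) := by
          apply measure_mono
          intro ω hω
          by_cases hG : ω ∈ G
          · exact Or.inl ⟨hω, hG⟩
          · exact Or.inr hG
      _ ≤ ℙ ({ω | chainR n U S ω ≠ 0} ∩ G) + ℙ Gᶜ := measure_union_le _ _
      _ = ℙ ({ω | chainR n U S ω ≠ 0} ∩ G) := by rw [hGc, add_zero]
      _ ≤ ℙ {ω | ENNReal.ofReal ((n:ℝ)⁻¹) ≤ ∏ i ∈ Finset.Icc 1 S, ENNReal.ofReal (U i ω)} :=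
          measure_mono hinc
      _ ≤ (ENNReal.ofReal 2⁻¹) ^ S / ENNReal.ofReal ((n:ℝ)⁻¹) :=
          prob_prod_ge hUm hind hmap _ ENNReal.measurable_ofReal _ lint_Icc_ofReal S
            ha0 ENNReal.ofReal_ne_top
      _ = (ENNReal.ofReal 2⁻¹) ^ S * (ENNReal.ofReal ((n:ℝ)⁻¹))⁻¹ := by
          rw [div_eq_mul_inv]
  -- bound on the main part
  have hA : ℙ A ≤ ENNReal.ofReal (1 / x) := by
    rcases Nat.eq_zero_or_pos T with hT0 | hT1
    · have : A = ∅ := by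
        ext ω
        simp only [hAdef, Set.mem_setOf_eq, Set.mem_empty_iff_false, iff_false, hT0]
        simp [chainR]
        omega
      rw [this, measure_empty]
      exact zero_le
    · -- T ≥ 1
      set z : ℝ≥0∞ := ENNReal.ofReal ((T:ℝ)/n) with hzdef
      have hTn0 : (0:ℝ) < (T:ℝ)/n := by
        apply div_pos _ hn0
        exact_mod_cast hT1
      have hz0 : z ≠ 0 := ne_of_gt (ENNReal.ofReal_pos.mpr hTn0)
      have hztop : z ≠ ⊤ := ENNReal.ofReal_ne_top
      set a : ℝ≥0∞ := z ^ (-(2⁻¹:ℝ)) with hadef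
      have ha0 : a ≠ 0 := by
        rw [hadef, ENNReal.rpow_neg]
        simp only [ne_eq, ENNReal.inv_eq_zero]
        exact ENNReal.rpow_ne_top_of_nonneg (by norm_num) hztop
      have hatop : a ≠ ⊤ := by
        rw [hadef, ENNReal.rpow_neg]
        simp only [ne_eq, ENNReal.inv_eq_top]
        exact (ENNReal.rpow_pos (pos_iff_ne_zero.mpr hz0) hztop).ne'
      have hinc : A ∩ G
          ⊆ {ω | a ≤ ∏ i ∈ Finset.Icc 1 T, (ENNReal.ofReal (U i ω)) ^ (-(2⁻¹:ℝ))} := by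
        rintro ω ⟨hω, hG⟩
        simp only [hAdef, Set.mem_setOf_eq] at hω ⊢
        have hG' : ∀ i, U i ω ∈ Set.Icc (0:ℝ) 1 := hG
        have h2 : (n:ℝ) * ∏ i ∈ Finset.Icc 1 T, U i ω ≤ T := by
          have := chain_ge (n := n) hG' T
          rw [hω] at this
          simpa using this
        have h3 : ∏ i ∈ Finset.Icc 1 T, U i ω ≤ (T:ℝ)/n := by
          rw [le_div_iff₀ hn0]
          linarith
        have h4 : ENNReal.ofReal (∏ i ∈ Finset.Icc 1 T, U i ω) ≤ z :=
          ENNReal.ofReal_le_ofReal h3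
        have h5 : ∏ i ∈ Finset.Icc 1 T, (ENNReal.ofReal (U i ω)) ^ (-(2⁻¹:ℝ))
            = (ENNReal.ofReal (∏ i ∈ Finset.Icc 1 T, U i ω)) ^ (-(2⁻¹:ℝ)) := by
          rw [ENNReal.prod_rpow_of_ne_top (fun i _ => ENNReal.ofReal_ne_top),
            ENNReal.ofReal_prod_of_nonneg (fun i _ => (hG' i).1)]
        rw [h5, hadef, ENNReal.rpow_neg, ENNReal.rpow_neg]
        exact ENNReal.inv_le_inv.mpr (ENNReal.rpow_le_rpow h4 (by norm_num))
      have hgmeas : Measurable (fun u : ℝ => (ENNReal.ofReal u) ^ (-(2⁻¹:ℝ))) :=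
        ENNReal.continuous_rpow_const.measurable.comp ENNReal.measurable_ofReal
      have hmain : ℙ A ≤ (ENNReal.ofReal 2) ^ T / a := by
        calc ℙ A ≤ ℙ (A ∩ G ∪ Gᶜ) := by
              apply measure_mono
              intro ω hω
              by_cases hG : ω ∈ G
              · exact Or.inl ⟨hω, hG⟩
              · exact Or.inr hG
          _ ≤ ℙ (A ∩ G) + ℙ Gᶜ := measure_union_le _ _
          _ = ℙ (A ∩ G) := by rw [hGc, add_zero]
          _ ≤ ℙ {ω | a ≤ ∏ i ∈ Finset.Icc 1 T, (ENNReal.ofReal (U i ω)) ^ (-(2⁻¹:ℝ))} :=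
              measure_mono hinc
          _ ≤ (ENNReal.ofReal 2) ^ T / a :=
              prob_prod_ge hUm hind hmap _ hgmeas _ lint_Icc_rpow T ha0 hatop
      have hconv : (ENNReal.ofReal 2) ^ T / a
          = ENNReal.ofReal (2^T * Real.sqrt ((T:ℝ)/n)) := by
        rw [div_eq_mul_inv, hadef, ENNReal.rpow_neg, inv_inv, hzdef,
          ENNReal.ofReal_rpow_of_nonneg (le_of_lt hTn0) (by norm_num),
          ← ENNReal.ofReal_pow (by norm_num),
          ← ENNReal.ofReal_mul (by positivity)]
        congr 1
        rw [Real.sqrt_eq_rpow]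
        norm_num
      calc ℙ A ≤ (ENNReal.ofReal 2) ^ T / a := hmain
        _ = ENNReal.ofReal (2^T * Real.sqrt ((T:ℝ)/n)) := hconv
        _ ≤ ENNReal.ofReal (1 / x) := by
            apply ENNReal.ofReal_le_ofReal
            rw [hxdef]
            exact final_numeric n T hn hT1 (by rw [← hxdef]; exact hTle)
  -- combine
  have hEbound : ℙ {ω | (hitZ n U ω : ℝ) < (100:ℝ)⁻¹ * x} ≤ ENNReal.ofReal (1 / x) := by
    have hC : (ENNReal.ofReal ((n:ℝ)⁻¹))⁻¹ ≠ ⊤ := by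
      simp only [ne_eq, ENNReal.inv_eq_top]
      exact ne_of_gt (ENNReal.ofReal_pos.mpr (by positivity))
    have h1 : Tendsto (fun S : ℕ => (ENNReal.ofReal 2⁻¹) ^ S) atTop (𝓝 0) :=
      ENNReal.tendsto_pow_atTop_nhds_zero_of_lt_one (by
        rw [ENNReal.ofReal_lt_one]; norm_num)
    have hfS : Tendsto
        (fun S : ℕ => (ENNReal.ofReal 2⁻¹) ^ S * (ENNReal.ofReal ((n:ℝ)⁻¹))⁻¹)
        atTop (𝓝 0) := by
      have := ENNReal.Tendsto.mul_const h1 (Or.inr hC)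
      simpa using this
    have hle : ∀ S : ℕ, ℙ {ω | (hitZ n U ω : ℝ) < (100:ℝ)⁻¹ * x}
        ≤ ℙ A + (ENNReal.ofReal 2⁻¹) ^ S * (ENNReal.ofReal ((n:ℝ)⁻¹))⁻¹ := by
      intro S
      calc ℙ {ω | (hitZ n U ω : ℝ) < (100:ℝ)⁻¹ * x}
          ≤ ℙ (A ∪ {ω | chainR n U S ω ≠ 0}) := measure_mono (hES S)
        _ ≤ ℙ A + ℙ {ω | chainR n U S ω ≠ 0} := measure_union_le _ _
        _ ≤ ℙ A + (ENNReal.ofReal 2⁻¹) ^ S * (ENNReal.ofReal ((n:ℝ)⁻¹))⁻¹ :=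
            add_le_add le_rfl (hB S)
    have htend : Tendsto
        (fun S : ℕ => ℙ A + (ENNReal.ofReal 2⁻¹) ^ S * (ENNReal.ofReal ((n:ℝ)⁻¹))⁻¹)
        atTop (𝓝 (ℙ A + 0)) := tendsto_const_nhds.add hfS
    have := ge_of_tendsto' htend hle
    rw [add_zero] at this
    exact this.trans hA
  have hnn : (0:ℝ) ≤ 1 / x := by positivity
  exact ENNReal.toReal_le_of_le_ofReal hnn hEbound
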